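/- Let κ > 0 and K be real constants with σ := K/κ < 0, let C be a real constant, and define φ(u,s) := √(−σ⁻¹·(C − u + s²))/(C − u) on an open set where C − u + s² > 0, C − u ≠ 0, and φ > 0. Then φ satisfies the projective PDE (∗): φ₂₂ = 2(φ₁ − s·φ₁₂), and with ψ := (φ₂ + 2s·φ₁)/(2φ) it satisfies κ·[ψ² − (ψ₂ + 2s·ψ₁)] = K·φ². -/

import Mathlib

/-- First partial derivative of `f = f(u,s)` with respect to the first variable. -/
noncomputable def pd1 (f : ℝ → ℝ → ℝ) (u s : ℝ) : ℝ := deriv (fun t => f t s) u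

/-- First partial derivative of `f = f(u,s)` with respect to the second variable. -/
noncomputable def pd2 (f : ℝ → ℝ → ℝ) (u s : ℝ) : ℝ := deriv (f u) s

/-- `ψ := (φ₂ + 2s·φ₁)/(2φ)`. -/
noncomputable def psi (f : ℝ → ℝ → ℝ) (u s : ℝ) : ℝ :=
  (pd2 f u s + 2 * s * pd1 f u s) / (2 * f u s)

/-- The case `D = 0` (Riemannian): `φ(u,s) = √(−σ⁻¹(C−u+s²))/(C−u)` satisfies the
projective PDE `φ₂₂ = 2(φ₁ − s·φ₁₂)` and the Einstein PDE with `μ = 0`: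
`κ·[ψ² − (ψ₂ + 2s·ψ₁)] = K·φ²`. -/
theorem stmt_19 (κ K : ℝ) (hκ : 0 < κ) (σ : ℝ) (hσdef : σ = K / κ) (hσ : σ < 0)
    (C : ℝ) (φ : ℝ → ℝ → ℝ)
    (hφ : ∀ u s : ℝ, φ u s = Real.sqrt (-σ⁻¹ * (C - u + s ^ 2)) / (C - u)) :
    ∀ u s : ℝ, 0 < C - u + s ^ 2 → C - u ≠ 0 → 0 < φ u s →
      (pd2 (pd2 φ) u s = 2 * (pd1 φ u s - s * pd2 (pd1 φ) u s)
        ∧ κ * ((psi φ u s) ^ 2 - (pd2 (psi φ) u s + 2 * s * pd1 (psi φ) u s))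
          = K * (φ u s) ^ 2) := by
  have hK : K < 0 := by
    rcases div_neg_iff.mp (hσdef ▸ hσ) with ⟨_, h⟩ | ⟨h, _⟩
    · linarith
    · exact h
  set a := -σ⁻¹ with ha_def
  have ha : 0 < a := by
    have : σ⁻¹ < 0 := inv_neg''.mpr hσ
    simpa [ha_def] using neg_pos.mpr this
  have hKa : K * a = -κ := by
    rw [ha_def, hσdef]
    field_simp
    rw [div_self (ne_of_lt hK)]
  clear_value a
  -- pd2 formula
  have hpd2 : ∀ x y : ℝ, 0 < C - x + y ^ 2 → C - x ≠ 0 →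
      pd2 φ x y = a * y / (Real.sqrt (a * (C - x + y ^ 2)) * (C - x)) := by
    intro x y hw hv
    have hfun : φ x = fun t => Real.sqrt (a * (C - x + t ^ 2)) / (C - x) :=
      funext fun t => hφ x t
    have h1 : HasDerivAt (fun t : ℝ => a * (C - x + t ^ 2)) (a * (2 * y ^ 1)) y :=
      HasDerivAt.const_mul a ((hasDerivAt_pow 2 y).const_add (C - x))
    have hne : a * (C - x + y ^ 2) ≠ 0 := ne_of_gt (mul_pos ha hw)
    have h2 := (h1.sqrt hne).div_const (C - x)
    have hr : Real.sqrt (a * (C - x + y ^ 2)) ≠ 0 :=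
      ne_of_gt (Real.sqrt_pos.mpr (mul_pos ha hw))
    rw [pd2, hfun, h2.deriv]
    field_simp
  -- pd1 formula
  have hpd1 : ∀ x y : ℝ, 0 < C - x + y ^ 2 → C - x ≠ 0 →
      pd1 φ x y = a * ((C - x) + 2 * y ^ 2) /
        (2 * Real.sqrt (a * (C - x + y ^ 2)) * (C - x) ^ 2) := by
    intro x y hw hv
    have hfun : (fun t => φ t y) = fun t => Real.sqrt (a * (C - t + y ^ 2)) / (C - t) :=
      funext fun t => hφ t y
    have h1 : HasDerivAt (fun t : ℝ => a * (C - t + y ^ 2)) (a * (-1)) x :=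
      HasDerivAt.const_mul a (((hasDerivAt_id x).const_sub C).add_const (y ^ 2))
    have hne : a * (C - x + y ^ 2) ≠ 0 := ne_of_gt (mul_pos ha hw)
    have hden : HasDerivAt (fun t : ℝ => C - t) (-1) x := by
      simpa using (hasDerivAt_id x).const_sub C
    have h3 : HasDerivAt (fun t => Real.sqrt (a * (C - t + y ^ 2)) / (C - t)) _ x :=
      (h1.sqrt hne).div hden hv
    set r := Real.sqrt (a * (C - x + y ^ 2)) with hrdef
    have hr2 : r ^ 2 = a * (C - x + y ^ 2) := Real.sq_sqrt (le_of_lt (mul_pos ha hw))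
    have hr : r ≠ 0 := ne_of_gt (Real.sqrt_pos.mpr (mul_pos ha hw))
    rw [pd1, hfun, h3.deriv]
    field_simp
    linear_combination 2 * hr2
  -- psi formula
  have hpsi : ∀ x y : ℝ, 0 < C - x + y ^ 2 → C - x ≠ 0 →
      psi φ x y = y / (C - x) := by
    intro x y hw hv
    have hr2 : Real.sqrt (a * (C - x + y ^ 2)) ^ 2 = a * (C - x + y ^ 2) :=
      Real.sq_sqrt (le_of_lt (mul_pos ha hw))
    have hr : Real.sqrt (a * (C - x + y ^ 2)) ≠ 0 :=
      ne_of_gt (Real.sqrt_pos.mpr (mul_pos ha hw))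
    have hane : a ≠ 0 := ne_of_gt ha
    rw [psi, hpd2 x y hw hv, hpd1 x y hw hv, hφ x y]
    set r := Real.sqrt (a * (C - x + y ^ 2)) with hrdef
    field_simp
    linear_combination (-2 * y) * hr2
  intro u s hw hv hpos
  have hne : a * (C - u + s ^ 2) ≠ 0 := ne_of_gt (mul_pos ha hw)
  have hrpos : 0 < Real.sqrt (a * (C - u + s ^ 2)) := Real.sqrt_pos.mpr (mul_pos ha hw)
  have hr : Real.sqrt (a * (C - u + s ^ 2)) ≠ 0 := ne_of_gt hrpos
  have hr2 : Real.sqrt (a * (C - u + s ^ 2)) ^ 2 = a * (C - u + s ^ 2) :=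
    Real.sq_sqrt (le_of_lt (mul_pos ha hw))
  have hopen : IsOpen {t : ℝ | 0 < C - u + t ^ 2} :=
    isOpen_lt continuous_const (continuous_const.add (continuous_pow 2))
  have hopenu : IsOpen {t : ℝ | 0 < C - t + s ^ 2 ∧ C - t ≠ 0} := by
    apply IsOpen.inter
    · exact isOpen_lt continuous_const
        ((continuous_const.sub continuous_id).add continuous_const)
    · exact isOpen_compl_singleton.preimage (continuous_const.sub continuous_id)
  -- φ₂₂
  have h22 : pd2 (pd2 φ) u s =
      (a * (Real.sqrt (a * (C - u + s ^ 2)) * (C - u)) -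
        a * s * (a * (2 * s ^ 1) / (2 * Real.sqrt (a * (C - u + s ^ 2))) * (C - u))) /
        (Real.sqrt (a * (C - u + s ^ 2)) * (C - u)) ^ 2 := by
    have hev : (fun t => pd2 φ u t) =ᶠ[nhds s]
        (fun t => a * t / (Real.sqrt (a * (C - u + t ^ 2)) * (C - u))) := by
      filter_upwards [hopen.mem_nhds hw] with t ht
      exact hpd2 u t ht hv
    rw [pd2, hev.deriv_eq]
    have hnum : HasDerivAt (fun t : ℝ => a * t) a s := by
      simpa using (hasDerivAt_id s).const_mul a
    have h1 : HasDerivAt (fun t : ℝ => a * (C - u + t ^ 2)) (a * (2 * s ^ 1)) s :=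
      HasDerivAt.const_mul a ((hasDerivAt_pow 2 s).const_add (C - u))
    have hden : HasDerivAt (fun t : ℝ => Real.sqrt (a * (C - u + t ^ 2)) * (C - u))
        ((a * (2 * s ^ 1) / (2 * Real.sqrt (a * (C - u + s ^ 2)))) * (C - u)) s :=
      (h1.sqrt hne).mul_const (C - u)
    exact (hnum.div hden (mul_ne_zero hr hv)).deriv
  -- φ₁₂
  have h12 : pd2 (pd1 φ) u s =
      (a * (2 * (2 * s ^ 1)) * (2 * Real.sqrt (a * (C - u + s ^ 2)) * (C - u) ^ 2) -
        a * ((C - u) + 2 * s ^ 2) *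
          (2 * (a * (2 * s ^ 1) / (2 * Real.sqrt (a * (C - u + s ^ 2)))) * (C - u) ^ 2)) /
        (2 * Real.sqrt (a * (C - u + s ^ 2)) * (C - u) ^ 2) ^ 2 := by
    have hev : (fun t => pd1 φ u t) =ᶠ[nhds s]
        (fun t => a * ((C - u) + 2 * t ^ 2) /
          (2 * Real.sqrt (a * (C - u + t ^ 2)) * (C - u) ^ 2)) := by
      filter_upwards [hopen.mem_nhds hw] with t ht
      exact hpd1 u t ht hv
    rw [pd2, hev.deriv_eq]
    have hnum : HasDerivAt (fun t : ℝ => a * ((C - u) + 2 * t ^ 2))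
        (a * (2 * (2 * s ^ 1))) s :=
      HasDerivAt.const_mul a ((HasDerivAt.const_mul 2 (hasDerivAt_pow 2 s)).const_add (C - u))
    have h1 : HasDerivAt (fun t : ℝ => a * (C - u + t ^ 2)) (a * (2 * s ^ 1)) s :=
      HasDerivAt.const_mul a ((hasDerivAt_pow 2 s).const_add (C - u))
    have hden : HasDerivAt
        (fun t : ℝ => 2 * Real.sqrt (a * (C - u + t ^ 2)) * (C - u) ^ 2)
        ((2 * (a * (2 * s ^ 1) / (2 * Real.sqrt (a * (C - u + s ^ 2))))) * (C - u) ^ 2) s :=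
      (HasDerivAt.const_mul 2 (h1.sqrt hne)).mul_const ((C - u) ^ 2)
    have hdne : 2 * Real.sqrt (a * (C - u + s ^ 2)) * (C - u) ^ 2 ≠ 0 := by
      positivity
    exact (hnum.div hden hdne).deriv
  -- ψ₂
  have hp2 : pd2 (psi φ) u s = 1 / (C - u) := by
    have hev : (fun t => psi φ u t) =ᶠ[nhds s] (fun t => t / (C - u)) := by
      filter_upwards [hopen.mem_nhds hw] with t ht
      exact hpsi u t ht hv
    rw [pd2, hev.deriv_eq]
    simpa using ((hasDerivAt_id s).div_const (C - u)).deriv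
  -- ψ₁
  have hp1 : pd1 (psi φ) u s = s / (C - u) ^ 2 := by
    have hev : (fun t => psi φ t s) =ᶠ[nhds u] (fun t => s / (C - t)) := by
      filter_upwards [hopenu.mem_nhds ⟨hw, hv⟩] with t ht
      exact hpsi t s ht.1 ht.2
    rw [pd1, hev.deriv_eq]
    have hden : HasDerivAt (fun t : ℝ => C - t) (-1) u := by
      simpa using (hasDerivAt_id u).const_sub C
    have : HasDerivAt (fun t => s / (C - t)) _ u := (hasDerivAt_const u s).div hden hv
    rw [this.deriv]
    field_simp
    ring
  set r := Real.sqrt (a * (C - u + s ^ 2)) with hrdef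
  have h22c : pd2 (pd2 φ) u s = a ^ 2 / r ^ 3 := by
    rw [h22]
    field_simp
    linear_combination hr2
  have h12c : pd2 (pd1 φ) u s =
      a ^ 2 * s * (3 * (C - u) + 2 * s ^ 2) / (2 * r ^ 3 * (C - u) ^ 2) := by
    rw [h12]
    field_simp
    linear_combination (4 * s) * hr2
  have hφ2 : (φ u s) ^ 2 = a * (C - u + s ^ 2) / (C - u) ^ 2 := by
    rw [hφ u s, div_pow, ← hrdef, hr2]
  constructor
  · rw [h22c, h12c, hpd1 u s hw hv, ← hrdef]
    field_simp
    linear_combination (-((C - u) + 2 * s ^ 2)) * hr2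
  · rw [hpsi u s hw hv, hp2, hp1, hφ2]
    field_simp
    linear_combination (-(C - u + s ^ 2)) * hKa
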